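/- arXiv:1409.4279 — 2 statements merged into one kernel-verified Lean document; each statement's English description precedes it below -/
import Mathlib

section
/- Correct first selection of GARD in the presence of both inlier and outlier noise: let Q ∈ ℝ^{n×m} have orthonormal columns (QᵀQ = Iₘ), let u₀ ∈ ℝⁿ be s-sparse with nonempty support S, let η ∈ ℝⁿ satisfy ‖η‖₂ ≤ ε₀, and let δ ∈ [0,1] satisfy the principal-angle bound for sparsity level s with δ < √2/2 and δ² < (min{|u₀ᵢ| : i ∈ S} − (2+√6) ε₀) / (2 ‖u₀‖₂). Then the initial residual r⁰ = (Iₙ − QQᵀ)(Qw₀ + u₀ + η) = u₀ + η − QQᵀu₀ − QQᵀη satisfies |r⁰ᵢ| > |r⁰ⱼ| for every i ∈ S and every j ∉ S. -/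
open Matrix

/-- Euclidean (ℓ₂) norm of a finitely-indexed real vector. -/
noncomputable def norm2 {ι : Type*} [Fintype ι] (v : ι → ℝ) : ℝ :=
  Real.sqrt (∑ i, v i ^ 2)

/-- A vector of `ℝⁿ` is `s`-sparse if it has at most `s` nonzero entries. -/
def Sparse {n : ℕ} (s : ℕ) (v : Fin n → ℝ) : Prop :=
  ∃ T : Finset (Fin n), T.card ≤ s ∧ ∀ i ∉ T, v i = 0

/-- `δ` satisfies the principal-angle bound for `Q` at sparsity level `s`:
`|⟨Qw, v⟩| ≤ δ ‖Qw‖₂ ‖v‖₂` for every `w` and every `s`-sparse `v`. -/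
def PABound {n m : ℕ} (Q : Matrix (Fin n) (Fin m) ℝ) (s : ℕ) (δ : ℝ) : Prop :=
  ∀ (w : Fin m → ℝ) (v : Fin n → ℝ), Sparse s v →
    |Q.mulVec w ⬝ᵥ v| ≤ δ * norm2 (Q.mulVec w) * norm2 v

/-- The `n × |S|` matrix `I_S` whose columns are the standard basis vectors `e_j`, `j ∈ S`. -/
def colSel {n : ℕ} (S : Finset (Fin n)) : Matrix (Fin n) {i // i ∈ S} ℝ :=
  Matrix.of fun i j => if i = (j : Fin n) then 1 else 0

/-- `F_S(a) = I_S I_Sᵀ a`: the vector agreeing with `a` on `S` and zero elsewhere. -/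
def restrictVec {n : ℕ} (S : Finset (Fin n)) (a : Fin n → ℝ) : Fin n → ℝ :=
  fun i => if i ∈ S then a i else 0

lemma norm2_nonneg {ι : Type*} [Fintype ι] (v : ι → ℝ) : 0 ≤ norm2 v := Real.sqrt_nonneg _

lemma sq_norm2 {ι : Type*} [Fintype ι] (v : ι → ℝ) : norm2 v ^ 2 = ∑ i, v i ^ 2 :=
  Real.sq_sqrt (by positivity)

lemma dot_self_eq {ι : Type*} [Fintype ι] (v : ι → ℝ) : v ⬝ᵥ v = norm2 v ^ 2 := by
  rw [sq_norm2]; simp [dotProduct, sq]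

lemma abs_le_norm2 {ι : Type*} [Fintype ι] (v : ι → ℝ) (j : ι) : |v j| ≤ norm2 v := by
  rw [← Real.sqrt_sq_eq_abs]
  exact Real.sqrt_le_sqrt
    (Finset.single_le_sum (f := fun i => v i ^ 2) (fun i _ => sq_nonneg _) (Finset.mem_univ j))


lemma tri_up (a b c d : ℝ) : |a + b - c - d| ≤ |a| + |b| + |c| + |d| := by
  rw [show a + b - c - d = a + b + -c + -d from by ring]
  calc |a + b + -c + -d| ≤ |a + b + -c| + |-d| := abs_add_le _ _
    _ ≤ |a + b| + |-c| + |-d| := by linarith [abs_add_le (a + b) (-c)]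
    _ ≤ |a| + |b| + |c| + |d| := by
        rw [abs_neg, abs_neg]; linarith [abs_add_le a b]

lemma tri_low (a b c d : ℝ) : |a| - (|b| + |c| + |d|) ≤ |a + b - c - d| := by
  have h2 : |c + d - b| ≤ |b| + |c| + |d| := by
    rw [show c + d - b = c + d + -b from by ring]
    calc |c + d + -b| ≤ |c + d| + |-b| := abs_add_le _ _
      _ ≤ |b| + |c| + |d| := by rw [abs_neg]; linarith [abs_add_le c d]
  have h1 : |a| ≤ |a + b - c - d| + |c + d - b| := by
    calc |a| = |(a + b - c - d) + (c + d - b)| := by ring_nf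
      _ ≤ |a + b - c - d| + |c + d - b| := abs_add_le _ _
  linarith

lemma norm2_single_one {n : ℕ} (j : Fin n) : norm2 (Pi.single j 1 : Fin n → ℝ) = 1 := by
  unfold norm2
  rw [show (∑ i, (Pi.single j 1 : Fin n → ℝ) i ^ 2) = 1 by
    rw [Finset.sum_eq_single j] <;> simp +contextual [Pi.single_apply]]
  exact Real.sqrt_one

lemma key_dot {n m : ℕ} (Q : Matrix (Fin n) (Fin m) ℝ) (hQ : Qᵀ * Q = 1)
    (a : Fin n → ℝ) :
    Q.mulVec (Qᵀ.mulVec a) ⬝ᵥ Q.mulVec (Qᵀ.mulVec a) = Q.mulVec (Qᵀ.mulVec a) ⬝ᵥ a := by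
  set c := Qᵀ.mulVec a with hc
  have h1 : Q.vecMul (Q.mulVec c) = c := by
    rw [← Matrix.mulVec_transpose, Matrix.mulVec_mulVec, hQ, Matrix.one_mulVec]
  have h2 : Q.mulVec c ⬝ᵥ Q.mulVec c = c ⬝ᵥ c := by
    rw [Matrix.dotProduct_mulVec, h1]
  have h3 : Q.mulVec c ⬝ᵥ a = c ⬝ᵥ c := by
    rw [dotProduct_comm, Matrix.dotProduct_mulVec, ← Matrix.mulVec_transpose, ← hc]
  rw [h2, h3]

/-- Correct first selection of GARD with both inlier and outlier noise: if `δ < √2/2` and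
`δ² < (min_{i ∈ S} |u₀ᵢ| − (2 + √6) ε₀) / (2‖u₀‖₂)`, then the initial residual
`r⁰ = (I − QQᵀ)(Qw₀ + u₀ + η)` satisfies `|r⁰ᵢ| > |r⁰ⱼ|` for every `i ∈ S`, `j ∉ S`. -/
theorem stmt15 {n m s : ℕ} (Q : Matrix (Fin n) (Fin m) ℝ) (hQ : Qᵀ * Q = 1)
    (δ : ℝ) (hδ0 : 0 ≤ δ) (hδ1 : δ ≤ 1) (hPA : PABound Q s δ)
    (u₀ : Fin n → ℝ) (S : Finset (Fin n)) (hsupp : ∀ i, i ∈ S ↔ u₀ i ≠ 0)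
    (hSne : S.Nonempty) (hcard : S.card ≤ s)
    (η : Fin n → ℝ) (ε₀ : ℝ) (hη : norm2 η ≤ ε₀)
    (hδhalf : δ < Real.sqrt 2 / 2)
    (hbound : δ ^ 2 <
      (S.inf' hSne (fun i => |u₀ i|) - (2 + Real.sqrt 6) * ε₀) / (2 * norm2 u₀))
    (w₀ : Fin m → ℝ) (r₀ : Fin n → ℝ)
    (hr₀ : r₀ = (Q.mulVec w₀ + u₀ + η) -
      Q.mulVec (Qᵀ.mulVec (Q.mulVec w₀ + u₀ + η))) :
    ∀ i ∈ S, ∀ j ∉ S, |r₀ j| < |r₀ i| := by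
  intro i hi j hj
  set p := Q.mulVec (Qᵀ.mulVec u₀) with hp
  set q := Q.mulVec (Qᵀ.mulVec η) with hqdef
  -- simplify r₀
  have hr : ∀ k, r₀ k = u₀ k + η k - p k - q k := by
    intro k
    have : Qᵀ.mulVec (Q.mulVec w₀ + u₀ + η)
        = w₀ + Qᵀ.mulVec u₀ + Qᵀ.mulVec η := by
      rw [Matrix.mulVec_add, Matrix.mulVec_add, Matrix.mulVec_mulVec, hQ, Matrix.one_mulVec]
    rw [hr₀, this]
    simp [Matrix.mulVec_add, hp, hqdef]
    ring
  -- sparsity facts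
  have hs1 : 1 ≤ s := le_trans (Finset.card_pos.mpr hSne) hcard
  have hsp_single : ∀ k : Fin n, Sparse s (Pi.single k 1 : Fin n → ℝ) := by
    intro k
    exact ⟨{k}, by simpa using hs1, fun i hik => Pi.single_eq_of_ne (by simpa using hik) 1⟩
  have hsp_u : Sparse s u₀ :=
    ⟨S, hcard, fun i hiS => by by_contra h; exact hiS ((hsupp i).mpr h)⟩
  -- componentwise bounds from PA
  have hcomp : ∀ (c : Fin m → ℝ) (k : Fin n),
      |Q.mulVec c k| ≤ δ * norm2 (Q.mulVec c) := by
    intro c k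
    have := hPA c (Pi.single k 1) (hsp_single k)
    rwa [norm2_single_one, mul_one, show Q.mulVec c ⬝ᵥ Pi.single k 1 = Q.mulVec c k by simp]
      at this
  -- ‖p‖ ≤ δ‖u₀‖
  have hpn : norm2 p ≤ δ * norm2 u₀ := by
    have hk := key_dot Q hQ u₀
    have hPAp := hPA (Qᵀ.mulVec u₀) u₀ hsp_u
    rw [← hp] at hk hPAp
    have h1 : norm2 p ^ 2 ≤ δ * norm2 p * norm2 u₀ := by
      rw [← dot_self_eq, hk]
      exact le_trans (le_abs_self _) hPAp
    rcases eq_or_lt_of_le (norm2_nonneg p) with h0 | h0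
    · rw [← h0]; exact mul_nonneg hδ0 (norm2_nonneg u₀)
    · have := (mul_le_mul_iff_of_pos_right h0).mp (by nlinarith [h1] : norm2 p * norm2 p ≤ (δ * norm2 u₀) * norm2 p)
      linarith
  -- ‖q‖ ≤ ‖η‖ ≤ ε₀
  have hqn : norm2 q ≤ ε₀ := by
    have hk := key_dot Q hQ η
    rw [← hqdef] at hk
    have hdiff : (0:ℝ) ≤ (η - q) ⬝ᵥ (η - q) := by
      rw [dot_self_eq]; positivity
    have hexp : (η - q) ⬝ᵥ (η - q) = η ⬝ᵥ η - q ⬝ᵥ q := by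
      have hqη : q ⬝ᵥ η = q ⬝ᵥ q := hk.symm
      have hηq : η ⬝ᵥ q = q ⬝ᵥ q := by rw [dotProduct_comm]; exact hqη
      simp only [sub_dotProduct, dotProduct_sub, hqη, hηq]
      ring
    have h2 : norm2 q ^ 2 ≤ norm2 η ^ 2 := by
      rw [← dot_self_eq, ← dot_self_eq]; linarith [hexp ▸ hdiff]
    have h3 : norm2 q ≤ norm2 η := by
      nlinarith [norm2_nonneg q, norm2_nonneg η, h2]
    linarith
  have hε0 : 0 ≤ ε₀ := le_trans (norm2_nonneg η) hη
  -- componentwise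
  have hpk : ∀ k, |p k| ≤ δ ^ 2 * norm2 u₀ := by
    intro k
    calc |p k| ≤ δ * norm2 p := hcomp _ k
      _ ≤ δ * (δ * norm2 u₀) := by nlinarith
      _ = δ ^ 2 * norm2 u₀ := by ring
  have hqk : ∀ k, |q k| ≤ δ * ε₀ := by
    intro k
    calc |q k| ≤ δ * norm2 q := hcomp _ k
      _ ≤ δ * ε₀ := by nlinarith
  have hηk : ∀ k, |η k| ≤ ε₀ := fun k => le_trans (abs_le_norm2 η k) hη
  -- norm u₀ positive
  have hu0 : 0 < norm2 u₀ := by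
    obtain ⟨k, hk⟩ := hSne
    have : u₀ k ≠ 0 := (hsupp k).mp hk
    have h1 : 0 < |u₀ k| := abs_pos.mpr this
    linarith [abs_le_norm2 u₀ k]
  set M := S.inf' hSne (fun i => |u₀ i|) with hM
  have hMle : M ≤ |u₀ i| := Finset.inf'_le _ hi
  -- main numeric bound from hbound
  have hmain : 2 * (δ ^ 2 * norm2 u₀) < M - (2 + Real.sqrt 6) * ε₀ := by
    have h := (lt_div_iff₀ (by linarith : (0:ℝ) < 2 * norm2 u₀)).mp hbound
    nlinarith
  have hsqrt6 : (2:ℝ) ≤ Real.sqrt 6 := by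
    rw [show (2:ℝ) = Real.sqrt 4 by rw [show (4:ℝ) = 2^2 by norm_num, Real.sqrt_sq (by norm_num)]]
    exact Real.sqrt_le_sqrt (by norm_num)
  -- bound on j
  have hu0j : u₀ j = 0 := by by_contra h; exact hj ((hsupp j).mpr h)
  have hrj : |r₀ j| ≤ δ ^ 2 * norm2 u₀ + (1 + δ) * ε₀ := by
    rw [hr j]
    have := tri_up (u₀ j) (η j) (p j) (q j)
    have h0 : |u₀ j| = 0 := by rw [hu0j, abs_zero]
    nlinarith [hηk j, hpk j, hqk j]
  -- bound on i
  have hri : M - (δ ^ 2 * norm2 u₀ + (1 + δ) * ε₀) ≤ |r₀ i| := by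
    rw [hr i]
    have := tri_low (u₀ i) (η i) (p i) (q i)
    nlinarith [hηk i, hpk i, hqk i, hMle]
  -- combine
  have hprod : 0 ≤ (Real.sqrt 6 - 2 * δ) * ε₀ :=
    mul_nonneg (by linarith) hε0
  have : δ ^ 2 * norm2 u₀ + (1 + δ) * ε₀ < M - (δ ^ 2 * norm2 u₀ + (1 + δ) * ε₀) := by
    nlinarith
  linarith
end

section
/- Residual formula at the k-th GARD step with inlier noise: let Q ∈ ℝ^{n×m} have orthonormal columns (QᵀQ = Iₘ), y = Qw₀ + u₀ + η with supp(u₀) = S, and let S_k ⊆ S be a set of k ≥ 1 indices such that M_k = I_k − I_{S_k}ᵀ Q Qᵀ I_{S_k} is invertible. Then Φ_k = [Q I_{S_k}] has full column rank, and for the (unique) minimizer z* of ‖y − Φ_k z‖₂ the residual satisfies y − Φ_k z* = v_k + η_k − QQᵀ v_k − QQᵀ η_k, where v_k = F_{S∖S_k}(u₀) + I_{S_k} M_k⁻¹ I_{S_k}ᵀ Q Qᵀ F_{S∖S_k}(u₀) and η_k = F_{J∖S_k}(η) + I_{S_k} M_k⁻¹ I_{S_k}ᵀ Q Qᵀ F_{J∖S_k}(η)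 with J = {1,…,n}. -/
open Matrix

lemma colSelT_mulVec {n : ℕ} (Sk : Finset (Fin n)) (x : Fin n → ℝ) (j : {i // i ∈ Sk}) :
    ((colSel Sk)ᵀ.mulVec x) j = x j := by
  simp [Matrix.mulVec, dotProduct, colSel, Matrix.transpose_apply, ite_mul]

lemma colSel_mulVec {n : ℕ} (Sk : Finset (Fin n)) (c : {i // i ∈ Sk} → ℝ) (i : Fin n) :
    ((colSel Sk).mulVec c) i = if h : i ∈ Sk then c ⟨i, h⟩ else 0 := by
  classical
  have hrfl : ((colSel Sk).mulVec c) i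
      = ∑ j : {i // i ∈ Sk}, (if i = (j : Fin n) then 1 else 0) * c j := rfl
  by_cases h : i ∈ Sk
  · rw [dif_pos h, hrfl, Finset.sum_eq_single (⟨i, h⟩ : {i // i ∈ Sk})]
    · simp
    · intro b _ hb
      have hne : i ≠ (b : Fin n) := by
        intro he; exact hb (by apply Subtype.ext; exact he.symm)
      simp [hne]
    · simp
  · rw [dif_neg h, hrfl]
    apply Finset.sum_eq_zero
    intro b _
    have hne : i ≠ (b : Fin n) := fun he => h (he ▸ b.2)
    simp [hne]

lemma colSelT_colSel_mulVec {n : ℕ} (Sk : Finset (Fin n)) (c : {i // i ∈ Sk} → ℝ) :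
    (colSel Sk)ᵀ.mulVec ((colSel Sk).mulVec c) = c := by
  funext j
  rw [colSelT_mulVec, colSel_mulVec, dif_pos j.2]

lemma min_orth {N K : Type*} [Fintype N] [Fintype K] (Φ : Matrix N K ℝ) (y : N → ℝ)
    (zs : K → ℝ) (h : ∀ z, norm2 (y - Φ.mulVec zs) ≤ norm2 (y - Φ.mulVec z)) :
    ∀ d : K → ℝ, (y - Φ.mulVec zs) ⬝ᵥ Φ.mulVec d = 0 := by
  intro d
  set r : N → ℝ := y - Φ.mulVec zs with hr
  set w : N → ℝ := Φ.mulVec d with hw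
  set b : ℝ := r ⬝ᵥ w with hb
  set c : ℝ := w ⬝ᵥ w with hcdef
  have hc : 0 ≤ c := by
    rw [hcdef]
    exact Finset.sum_nonneg fun i _ => mul_self_nonneg _
  have key : ∀ t : ℝ, 2 * t * b ≤ t ^ 2 * c := by
    intro t
    have h1 := h (zs + t • d)
    have h2 : y - Φ.mulVec (zs + t • d) = r - t • w := by
      rw [Matrix.mulVec_add, Matrix.mulVec_smul]
      funext i
      simp [hr]
      ring
    rw [h2] at h1
    have hnn : (0:ℝ) ≤ ∑ i, (r - t • w) i ^ 2 :=
      Finset.sum_nonneg fun i _ => sq_nonneg _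
    have hs1 : ∑ i, r i ^ 2 ≤ ∑ i, (r - t • w) i ^ 2 := by
      have h3 : Real.sqrt (∑ i, r i ^ 2) ≤ Real.sqrt (∑ i, (r - t • w) i ^ 2) := h1
      have h4 : (0:ℝ) ≤ ∑ i, r i ^ 2 :=
        Finset.sum_nonneg fun i _ => sq_nonneg _
      calc ∑ i, r i ^ 2 = (Real.sqrt (∑ i, r i ^ 2)) ^ 2 := (Real.sq_sqrt h4).symm
        _ ≤ (Real.sqrt (∑ i, (r - t • w) i ^ 2)) ^ 2 :=
            pow_le_pow_left₀ (Real.sqrt_nonneg _) h3 2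
        _ = ∑ i, (r - t • w) i ^ 2 := Real.sq_sqrt hnn
    have hexp : ∑ i, (r - t • w) i ^ 2
        = ∑ i, r i ^ 2 - 2 * t * b + t ^ 2 * c := by
      have : ∀ i, (r - t • w) i ^ 2
          = r i ^ 2 - 2 * t * (r i * w i) + t ^ 2 * (w i * w i) := by
        intro i; simp only [Pi.sub_apply, Pi.smul_apply, smul_eq_mul]; ring
      rw [Finset.sum_congr rfl fun i _ => this i]
      rw [Finset.sum_add_distrib, Finset.sum_sub_distrib, ← Finset.mul_sum, ← Finset.mul_sum]
      rfl
    rw [hexp] at hs1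
    linarith
  show b = 0
  rcases eq_or_lt_of_le hc with hc0 | hcpos
  · have hk := key b
    rw [← hc0, mul_zero] at hk
    nlinarith
  · have hk := key (b / c)
    have h1 : 2 * (b / c) * b * c ≤ (b / c) ^ 2 * c * c :=
      mul_le_mul_of_nonneg_right hk hc
    have h2 : (b / c) * c = b := div_mul_cancel₀ b (ne_of_gt hcpos)
    have h3 : 2 * b * b ≤ b * b := by
      have e1 : 2 * (b / c) * b * c = 2 * b * b := by
        field_simp
        try ring
      have e2 : (b / c) ^ 2 * c * c = b * b := by
        field_simp
        try ring
      rw [e1, e2] at h1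
      exact h1
    nlinarith [mul_self_nonneg b]

/-- Residual formula at the `k`-th GARD step with inlier noise: for `S_k ⊆ S` nonempty with
`M_k` invertible, `Φ_k = [Q I_{S_k}]` has full column rank and the least-squares residual
equals `v_k + η_k − QQᵀ v_k − QQᵀ η_k`, where `v_k` and `η_k` are the modified outlier and
inlier-noise vectors. -/
theorem stmt17 {n m : ℕ} (Q : Matrix (Fin n) (Fin m) ℝ) (hQ : Qᵀ * Q = 1)
    (w₀ : Fin m → ℝ) (u₀ η : Fin n → ℝ) (S : Finset (Fin n))
    (hsupp : ∀ i, i ∈ S ↔ u₀ i ≠ 0)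
    (y : Fin n → ℝ) (hy : y = Q.mulVec w₀ + u₀ + η)
    (Sk : Finset (Fin n)) (hSkS : Sk ⊆ S) (hSkne : Sk.Nonempty)
    (Mk : Matrix {i // i ∈ Sk} {i // i ∈ Sk} ℝ)
    (hMk : Mk = 1 - (colSel Sk)ᵀ * Q * Qᵀ * colSel Sk) (hMkInv : IsUnit Mk)
    (Φk : Matrix (Fin n) (Fin m ⊕ {i // i ∈ Sk}) ℝ)
    (hΦk : Φk = Matrix.fromCols Q (colSel Sk))
    (vk : Fin n → ℝ)
    (hvk : vk = restrictVec (S \ Sk) u₀ +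
      (colSel Sk).mulVec ((Mk⁻¹).mulVec
        ((colSel Sk)ᵀ.mulVec (Q.mulVec (Qᵀ.mulVec (restrictVec (S \ Sk) u₀))))))
    (ηk : Fin n → ℝ)
    (hηk : ηk = restrictVec (Finset.univ \ Sk) η +
      (colSel Sk).mulVec ((Mk⁻¹).mulVec
        ((colSel Sk)ᵀ.mulVec (Q.mulVec (Qᵀ.mulVec (restrictVec (Finset.univ \ Sk) η)))))) :
    Function.Injective Φk.mulVec ∧
      ∀ zstar : Fin m ⊕ {i // i ∈ Sk} → ℝ,
        (∀ z, norm2 (y - Φk.mulVec zstar) ≤ norm2 (y - Φk.mulVec z)) →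
          y - Φk.mulVec zstar =
            vk + ηk - Q.mulVec (Qᵀ.mulVec vk) - Q.mulVec (Qᵀ.mulVec ηk) := by
  classical
  set A := colSel Sk with hA
  have hQQ : ∀ v : Fin m → ℝ, Qᵀ.mulVec (Q.mulVec v) = v := by
    intro v; rw [Matrix.mulVec_mulVec, hQ, Matrix.one_mulVec]
  have hAA : ∀ c : {i // i ∈ Sk} → ℝ, Aᵀ.mulVec (A.mulVec c) = c :=
    colSelT_colSel_mulVec Sk
  have hMdet : IsUnit Mk.det := (Matrix.isUnit_iff_isUnit_det Mk).mp hMkInv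
  have hMvec : ∀ c : {i // i ∈ Sk} → ℝ,
      Mk.mulVec c = c - Aᵀ.mulVec (Q.mulVec (Qᵀ.mulVec (A.mulVec c))) := by
    intro c
    rw [hMk, Matrix.sub_mulVec, Matrix.one_mulVec]
    congr 1
    rw [Matrix.mulVec_mulVec, Matrix.mulVec_mulVec, Matrix.mulVec_mulVec]
  have hinj : Function.Injective Φk.mulVec := by
    intro a b hab
    have hz : Φk.mulVec (a - b) = 0 := by
      rw [Matrix.mulVec_sub, hab, sub_self]
    set z := a - b with hzdef
    have hsplit : z = Sum.elim (z ∘ Sum.inl) (z ∘ Sum.inr) := by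
      funext x; cases x <;> rfl
    set z₁ : Fin m → ℝ := z ∘ Sum.inl
    set z₂ : {i // i ∈ Sk} → ℝ := z ∘ Sum.inr
    have hz' : Q.mulVec z₁ + A.mulVec z₂ = 0 := by
      rw [hΦk] at hz
      rw [hsplit] at hz
      rwa [Matrix.fromCols_mulVec_sumElim] at hz
    have h1 : z₁ + Qᵀ.mulVec (A.mulVec z₂) = 0 := by
      have := congrArg Qᵀ.mulVec hz'
      rwa [Matrix.mulVec_add, hQQ, Matrix.mulVec_zero] at this
    have h2 : Aᵀ.mulVec (Q.mulVec z₁) + z₂ = 0 := by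
      have := congrArg Aᵀ.mulVec hz'
      rwa [Matrix.mulVec_add, hAA, Matrix.mulVec_zero] at this
    have hz1 : z₁ = -(Qᵀ.mulVec (A.mulVec z₂)) := eq_neg_of_add_eq_zero_left h1
    have hM0 : Mk.mulVec z₂ = 0 := by
      rw [hMvec]
      have : Aᵀ.mulVec (Q.mulVec z₁) = -z₂ := eq_neg_of_add_eq_zero_left h2
      rw [hz1, Matrix.mulVec_neg, Matrix.mulVec_neg] at this
      have h3 : Aᵀ.mulVec (Q.mulVec (Qᵀ.mulVec (A.mulVec z₂))) = z₂ := by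
        have := congrArg Neg.neg this
        simpa using this
      rw [h3, sub_self]
    have hz2 : z₂ = 0 := by
      calc z₂ = (Mk⁻¹ * Mk).mulVec z₂ := by
              rw [Matrix.nonsing_inv_mul Mk hMdet, Matrix.one_mulVec]
        _ = Mk⁻¹.mulVec (Mk.mulVec z₂) := (Matrix.mulVec_mulVec _ _ _).symm
        _ = 0 := by rw [hM0, Matrix.mulVec_zero]
    have hz1' : z₁ = 0 := by
      rw [hz1, hz2, Matrix.mulVec_zero, Matrix.mulVec_zero, neg_zero]
    have : z = 0 := by
      funext x
      cases x with
      | inl i => exact congrFun hz1' i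
      | inr j => exact congrFun hz2 j
    exact sub_eq_zero.mp this
  refine ⟨hinj, ?_⟩
  intro zstar hmin
  set g : Fin n → ℝ := restrictVec (S \ Sk) u₀ + restrictVec (Finset.univ \ Sk) η with hg
  set c : {i // i ∈ Sk} → ℝ :=
    (Mk⁻¹).mulVec (Aᵀ.mulVec (Q.mulVec (Qᵀ.mulVec g))) with hc
  have hsumv : vk + ηk = g + A.mulVec c := by
    rw [hvk, hηk, hc, hg]
    simp only [Matrix.mulVec_add]
    abel
  have hMc : Mk.mulVec c = Aᵀ.mulVec (Q.mulVec (Qᵀ.mulVec g)) := by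
    rw [hc, Matrix.mulVec_mulVec, Matrix.mul_nonsing_inv Mk hMdet, Matrix.one_mulVec]
  set r₀ : Fin n → ℝ := (g + A.mulVec c) - Q.mulVec (Qᵀ.mulVec (g + A.mulVec c)) with hr₀
  have hAg : Aᵀ.mulVec g = 0 := by
    funext j
    rw [colSelT_mulVec]
    have h1 : (j : Fin n) ∉ S \ Sk := by simp [j.2]
    have h2 : (j : Fin n) ∉ Finset.univ \ Sk := by simp [j.2]
    simp [hg, restrictVec, h1, h2]
  have hQr₀ : Qᵀ.mulVec r₀ = 0 := by
    rw [hr₀, Matrix.mulVec_sub, hQQ, sub_self]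
  have hAr₀ : Aᵀ.mulVec r₀ = 0 := by
    rw [hr₀, Matrix.mulVec_sub, Matrix.mulVec_add, hAg, Matrix.mulVec_add (Qᵀ)]
    rw [hAA, Matrix.mulVec_add Q, Matrix.mulVec_add Aᵀ]
    have h4 : Aᵀ.mulVec (Q.mulVec (Qᵀ.mulVec (A.mulVec c))) = c - Mk.mulVec c := by
      rw [hMvec]
      abel
    rw [h4, hMc]
    module
  have hr₀orth : ∀ d : Fin m ⊕ {i // i ∈ Sk} → ℝ, r₀ ⬝ᵥ Φk.mulVec d = 0 := by
    intro d
    have hdsplit : d = Sum.elim (d ∘ Sum.inl) (d ∘ Sum.inr) := by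
      funext x; cases x <;> rfl
    rw [hΦk, hdsplit, Matrix.fromCols_mulVec_sumElim, dotProduct_add]
    rw [Matrix.dotProduct_mulVec, Matrix.dotProduct_mulVec,
      ← Matrix.mulVec_transpose, ← Matrix.mulVec_transpose, hQr₀, hAr₀]
    simp
  -- y - r₀ is in the range of Φk
  have hAAT : ∀ (x : Fin n → ℝ) (i : Fin n),
      (A.mulVec (Aᵀ.mulVec x)) i = if i ∈ Sk then x i else 0 := by
    intro x i
    rw [hA, colSel_mulVec]
    by_cases h : i ∈ Sk
    · rw [dif_pos h, if_pos h, colSelT_mulVec]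
    · rw [dif_neg h, if_neg h]
  have hy' : y = Q.mulVec w₀ + g + A.mulVec (Aᵀ.mulVec (u₀ + η)) := by
    funext i
    have hAATi := hAAT (u₀ + η) i
    simp only [hy, hg, Pi.add_apply, restrictVec]
    rw [hAATi]
    by_cases h : i ∈ Sk
    · have h1 : i ∉ S \ Sk := by simp [h]
      have h2 : i ∉ Finset.univ \ Sk := by simp [h]
      rw [if_neg h1, if_neg h2, if_pos h, Pi.add_apply]
      ring
    · have h2 : i ∈ Finset.univ \ Sk := by simp [h]
      rw [if_pos h2, if_neg h]
      by_cases hS : i ∈ S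
      · have h1 : i ∈ S \ Sk := by simp [hS, h]
        rw [if_pos h1]
        ring
      · have hu0 : u₀ i = 0 := by
          by_contra hne; exact hS ((hsupp i).mpr hne)
        have h1 : i ∉ S \ Sk := by simp [hS]
        rw [if_neg h1, hu0]
        ring
  set z₀ : Fin m ⊕ {i // i ∈ Sk} → ℝ :=
    Sum.elim (w₀ + Qᵀ.mulVec (g + A.mulVec c)) (Aᵀ.mulVec (u₀ + η) - c) with hz₀
  have hΦz₀ : Φk.mulVec z₀ = y - r₀ := by
    rw [hΦk, hz₀, Matrix.fromCols_mulVec_sumElim, hy', hr₀]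
    rw [Matrix.mulVec_add Q w₀, Matrix.mulVec_sub A]
    abel
  have hortho := min_orth Φk y zstar hmin
  set r : Fin n → ℝ := y - Φk.mulVec zstar with hrdef
  have hrr : r - r₀ = Φk.mulVec (z₀ - zstar) := by
    rw [Matrix.mulVec_sub, hΦz₀, hrdef]
    abel
  have hdot0 : (r - r₀) ⬝ᵥ (r - r₀) = 0 := by
    rw [hrr]
    have h1 := hortho (z₀ - zstar)
    have h2 := hr₀orth (z₀ - zstar)
    calc Φk.mulVec (z₀ - zstar) ⬝ᵥ Φk.mulVec (z₀ - zstar)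
        = (r - r₀) ⬝ᵥ Φk.mulVec (z₀ - zstar) := by rw [hrr]
      _ = r ⬝ᵥ Φk.mulVec (z₀ - zstar) - r₀ ⬝ᵥ Φk.mulVec (z₀ - zstar) :=
          sub_dotProduct _ _ _
      _ = 0 := by rw [h1, h2, sub_zero]
  have hreq : r = r₀ := by
    have hsum0 : ∑ i, (r - r₀) i * (r - r₀) i = 0 := hdot0
    have hall : ∀ i ∈ Finset.univ, (r - r₀) i * (r - r₀) i = 0 := by
      rw [← Finset.sum_eq_zero_iff_of_nonneg (fun i _ => mul_self_nonneg _)]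
      exact hsum0
    funext i
    have := mul_self_eq_zero.mp (hall i (Finset.mem_univ i))
    have h5 : r i - r₀ i = 0 := this
    linarith
  have hRHS : vk + ηk - Q.mulVec (Qᵀ.mulVec vk) - Q.mulVec (Qᵀ.mulVec ηk) = r₀ := by
    rw [hr₀, ← hsumv, Matrix.mulVec_add Qᵀ vk, Matrix.mulVec_add Q]
    abel
  rw [hreq]
  exact hRHS.symm
end
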